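/- Space translate estimate for the approximate potential: let ε > 0, α_0 > 0, α_1 > 0, and assume hypotheses (H). There exists a constant C > 0, depending only on λ, α_0, α_1, V, ΔΨ_0^pzc, ΔΨ_1^pzc, P^max, N^max, ρ_hl and T (and independent of the mesh, of Δt and of η), such that for every mesh of size h, every time step, every solution of the scheme (S) satisfying 0 ≤ P_i^k ≤ P^max and 0 ≤ N_i^k ≤ N^max, and every η with 0 < η < h, one has ∫_0^T ∫_0^{1−η} (Ψ_{h,Δt}(x+η, t) − Ψ_{h,Δt}(x, t))² dx dt ≤ C η, where Ψ_{h,Δt} is the approximate potential. -/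

import Mathlib

open MeasureTheory Real Filter Topology

noncomputable section

namespace Corrosion

/-- The Bernoulli function `B(x) = x / (e^x - 1)`, `B(0) = 1`. -/
def Bern (x : ℝ) : ℝ := if x = 0 then 1 else x / (Real.exp x - 1)

/-- The two species: cations `P` and electrons `N`. -/
inductive Sp | P | N

/-- charge numbers: `z_P = 3`, `z_N = -1`. -/
def z : Sp → ℝ
  | Sp.P => 3
  | Sp.N => -1

/-- A mesh of `[0,1]`: edge points `xe 0 = x_{1/2} = 0 < xe 1 = x_{3/2} < … < xe I = x_{I+1/2} = 1`. -/
structure Mesh where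
  I : ℕ
  hI : 1 ≤ I
  xe : ℕ → ℝ
  xe0 : xe 0 = 0
  xeI : xe I = 1
  mono : ∀ j, j < I → xe j < xe (j + 1)

namespace Mesh

variable (m : Mesh)

/-- cell centers `x_i` for `1 ≤ i ≤ I` , with `x_0 = 0` and `x_{I+1} = 1`. -/
def xc (i : ℕ) : ℝ :=
  if i = 0 then 0 else if i = m.I + 1 then 1 else (m.xe (i - 1) + m.xe i) / 2

/-- `h_i = x_{i+1/2} - x_{i-1/2}` for `1 ≤ i ≤ I`. -/
def h (i : ℕ) : ℝ := m.xe i - m.xe (i - 1)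

/-- `h_{i+1/2} = x_{i+1} - x_i` for `0 ≤ i ≤ I`. -/
def hp (i : ℕ) : ℝ := m.xc (i + 1) - m.xc i

/-- mesh size `h = max_{1 ≤ i ≤ I} h_i`. -/
def size : ℝ := (Finset.Icc 1 m.I).sup' ⟨1, Finset.mem_Icc.mpr ⟨le_refl 1, m.hI⟩⟩ m.h

/-- piecewise constant function associated to a vector `(w_i)_{0 ≤ i ≤ I+1}`:
equal to `w i` on `(x_{i-1/2}, x_{i+1/2})`, to `w 0` at `x = 0`, to `w (I+1)` at `x = 1`. -/
def pw (w : ℕ → ℝ) (x : ℝ) : ℝ :=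
  if x = 0 then w 0 else if x = 1 then w (m.I + 1) else w (sInf {i : ℕ | x < m.xe i})

/-- square of the discrete `H¹` norm `‖w_h‖_{1,T}`. -/
def norm1sq (w : ℕ → ℝ) : ℝ :=
  (∑ i ∈ Finset.range (m.I + 1), (w (i + 1) - w i) ^ 2 / m.hp i) + w 0 ^ 2 + w (m.I + 1) ^ 2

/-- square of the discrete `L²` norm `‖w_h‖_0`. -/
def norm0sq (w : ℕ → ℝ) : ℝ := ∑ i ∈ Finset.Icc 1 m.I, m.h i * w i ^ 2

/-- the discrete dual norm `‖w_h‖_{-1,2,T}`. -/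
def normDual (w : ℕ → ℝ) : ℝ :=
  sSup {r : ℝ | ∃ v : ℕ → ℝ, m.norm1sq v ≤ 1 ∧
    r = ∫ x in Set.Ioo (0:ℝ) 1, m.pw w x * m.pw v x}

/-- piecewise constant space derivative: on `(x_i, x_{i+1})` it equals `(w_{i+1} - w_i)/h_{i+1/2}`. -/
def dpw (w : ℕ → ℝ) (x : ℝ) : ℝ :=
  (w (sInf {i : ℕ | x < m.xc (i + 1)} + 1) - w (sInf {i : ℕ | x < m.xc (i + 1)})) /
    m.hp (sInf {i : ℕ | x < m.xc (i + 1)})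

end Mesh

/-- All the data of the corrosion model. -/
structure Data where
  lam : ℝ
  eps : ℝ
  alpha0 : ℝ
  alpha1 : ℝ
  V : ℝ
  rho : ℝ
  dPsi0 : ℝ
  dPsi1 : ℝ
  umax : Sp → ℝ
  m0 : Sp → ℝ
  k0 : Sp → ℝ
  m1 : Sp → ℝ
  k1 : Sp → ℝ
  a0 : Sp → ℝ
  b0 : Sp → ℝ
  a1 : Sp → ℝ
  b1 : Sp → ℝ
  u0 : Sp → ℝ → ℝ
  lam_pos : 0 < lam
  umax_pos : ∀ u, 0 < umax u
  m0_pos : ∀ u, 0 < m0 u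
  k0_pos : ∀ u, 0 < k0 u
  m1_pos : ∀ u, 0 < m1 u
  k1_pos : ∀ u, 0 < k1 u
  a0_mem : ∀ u, a0 u ∈ Set.Icc (0:ℝ) 1
  b0_mem : ∀ u, b0 u ∈ Set.Icc (0:ℝ) 1
  a1_mem : ∀ u, a1 u ∈ Set.Icc (0:ℝ) 1
  b1_mem : ∀ u, b1 u ∈ Set.Icc (0:ℝ) 1
  u0_meas : ∀ u, Measurable (u0 u)

namespace Data
variable (d : Data)

/-- `ε_P = 1`, `ε_N = ε`. -/
def epsu : Sp → ℝ
  | Sp.P => 1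
  | Sp.N => d.eps

def beta0 (u : Sp) (x : ℝ) : ℝ :=
  d.m0 u * Real.exp (-(z u) * d.b0 u * x) + d.k0 u * Real.exp (z u * d.a0 u * x)

def beta1 (u : Sp) (x : ℝ) : ℝ :=
  d.m1 u * Real.exp (-(z u) * d.b1 u * x) + d.k1 u * Real.exp (z u * d.a1 u * x)

def gamma0 (u : Sp) (x : ℝ) : ℝ := d.m0 u * d.umax u * Real.exp (-(z u) * d.b0 u * x)

def gamma1 (u : Sp) (x : ℝ) : ℝ := d.k1 u * d.umax u * Real.exp (z u * d.a1 u * x)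

/-- Hypotheses (H). -/
def HypH : Prop :=
  (3 * d.umax Sp.P - d.umax Sp.N + d.rho = 0) ∧
  (∀ u, ∀ᵐ x ∂(volume.restrict (Set.Ioo (0:ℝ) 1)), 0 ≤ d.u0 u x ∧ d.u0 u x ≤ d.umax u) ∧
  (-(1 / (3 * d.a0 Sp.P)) * (1 + Real.log (d.alpha0 * d.a0 Sp.P * d.k0 Sp.P)) ≤ d.dPsi0 ∧
    d.dPsi0 ≤ (1 / d.a0 Sp.N) * (1 + Real.log (d.alpha0 * d.a0 Sp.N * d.k0 Sp.N))) ∧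
  (-(1 / d.b1 Sp.N) * (1 + Real.log (d.alpha1 * d.b1 Sp.N * d.m1 Sp.N)) ≤ d.dPsi1 ∧
    d.dPsi1 ≤ (1 / (3 * d.b1 Sp.P)) * (1 + Real.log (d.alpha1 * d.b1 Sp.P * d.m1 Sp.P)))

end Data

/-- `dΨ_{i+1/2} = (Ψ_{i+1} - Ψ_i)/h_{i+1/2}`. -/
def dPsiF (m : Mesh) (Psi : ℕ → ℝ) (i : ℕ) : ℝ := (Psi (i + 1) - Psi i) / m.hp i

/-- the Scharfetter-Gummel numerical flux `F_{u,i+1/2}`. -/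
def Flux (m : Mesh) (d : Data) (u : Sp) (Psi w : ℕ → ℝ) (i : ℕ) : ℝ :=
  (Bern (z u * m.hp i * dPsiF m Psi i) * w i -
    Bern (-(z u) * m.hp i * dPsiF m Psi i) * w (i + 1)) / m.hp i

/-- The fully implicit scheme (S), with time step `Δt = T / K`.
`sol u k i` is `u_i^k` (for `u = P, N`) and `Psi k i` is `Ψ_i^k`. -/
def Scheme (m : Mesh) (d : Data) (T : ℝ) (K : ℕ)
    (sol : Sp → ℕ → ℕ → ℝ) (Psi : ℕ → ℕ → ℝ) : Prop :=
  (∀ u i, 1 ≤ i → i ≤ m.I →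
    sol u 0 i = (1 / m.h i) * ∫ x in Set.Ioo (m.xe (i - 1)) (m.xe i), d.u0 u x) ∧
  (∀ k, k < K → ∀ i, 1 ≤ i → i ≤ m.I →
    -(d.lam ^ 2) * (dPsiF m (Psi (k + 1)) i - dPsiF m (Psi (k + 1)) (i - 1)) =
      m.h i * (3 * sol Sp.P (k + 1) i - sol Sp.N (k + 1) i + d.rho)) ∧
  (∀ u k, k < K → ∀ i, 1 ≤ i → i ≤ m.I →
    d.epsu u * m.h i * (sol u (k + 1) i - sol u k i) / (T / K) +
      Flux m d u (Psi (k + 1)) (sol u (k + 1)) i -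
      Flux m d u (Psi (k + 1)) (sol u (k + 1)) (i - 1) = 0) ∧
  (∀ k, k < K → Psi (k + 1) 0 - d.alpha0 * dPsiF m (Psi (k + 1)) 0 = d.dPsi0) ∧
  (∀ k, k < K →
    Psi (k + 1) (m.I + 1) + d.alpha1 * dPsiF m (Psi (k + 1)) m.I = d.V - d.dPsi1) ∧
  (∀ u k, k < K →
    -(Flux m d u (Psi (k + 1)) (sol u (k + 1)) 0) =
      d.beta0 u (Psi (k + 1) 0) * sol u (k + 1) 0 - d.gamma0 u (Psi (k + 1) 0)) ∧
  (∀ u k, k < K →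
    Flux m d u (Psi (k + 1)) (sol u (k + 1)) m.I =
      d.beta1 u (d.V - Psi (k + 1) (m.I + 1)) * sol u (k + 1) (m.I + 1) -
      d.gamma1 u (d.V - Psi (k + 1) (m.I + 1)))

/-- The stability property `0 ≤ u_i^k ≤ u^max` for all `i, k`. -/
def Stable (m : Mesh) (d : Data) (K : ℕ) (sol : Sp → ℕ → ℕ → ℝ) : Prop :=
  ∀ u k, k ≤ K → ∀ i, i ≤ m.I + 1 → 0 ≤ sol u k i ∧ sol u k i ≤ d.umax u

/-- the approximate space-time solution `w_{h,Δt}`, equal to the piecewise constant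
function built on `w^{k+1}` for `t ∈ [t^k, t^{k+1})`, with `Δt = T/K`. -/
def apx (m : Mesh) (T : ℝ) (K : ℕ) (w : ℕ → ℕ → ℝ) (x t : ℝ) : ℝ :=
  m.pw (w (Nat.floor (t / (T / K)) + 1)) x

/-- the discrete space derivative `∂_{x,T} w_{h,Δt}`. -/
def dapx (m : Mesh) (T : ℝ) (K : ℕ) (w : ℕ → ℕ → ℝ) (x t : ℝ) : ℝ :=
  m.dpw (w (Nat.floor (t / (T / K)) + 1)) x


/-- hyperbolic cotangent `coth y = cosh y / sinh y`. -/
def coth (x : ℝ) : ℝ := Real.cosh x / Real.sinh x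

/-- approximate trace at `x = 0`: `t ∈ [t^k, t^{k+1}) ↦ w_0^{k+1}`. -/
def trace0 (T : ℝ) (K : ℕ) (w : ℕ → ℕ → ℝ) (t : ℝ) : ℝ :=
  w (Nat.floor (t / (T / K)) + 1) 0

/-- approximate trace at `x = 1`: `t ∈ [t^k, t^{k+1}) ↦ w_{I+1}^{k+1}`. -/
def trace1 (m : Mesh) (T : ℝ) (K : ℕ) (w : ℕ → ℕ → ℝ) (t : ℝ) : ℝ :=
  w (Nat.floor (t / (T / K)) + 1) (m.I + 1)

/-- the measure on `(0,1) × (0,T)` (space × time). -/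
def stMeasure (T : ℝ) : MeasureTheory.Measure (ℝ × ℝ) :=
  (MeasureTheory.volume.restrict (Set.Ioo (0:ℝ) 1)).prod
    (MeasureTheory.volume.restrict (Set.Ioo (0:ℝ) T))

end Corrosion

namespace Corrosion

namespace Mesh
variable (m : Mesh)

lemma xe_strictMonoOn : ∀ i j, i < j → j ≤ m.I → m.xe i < m.xe j := by
  intro i j hij hj
  induction j with
  | zero => omega
  | succ n ih =>
    rcases Nat.lt_succ_iff_lt_or_eq.mp hij with h | h
    · exact lt_trans (ih h (by omega)) (m.mono n (by omega))
    · subst h; exact m.mono i (by omega)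

lemma xe_monoOn {i j : ℕ} (hij : i ≤ j) (hj : j ≤ m.I) : m.xe i ≤ m.xe j := by
  rcases eq_or_lt_of_le hij with h | h
  · subst h; exact le_refl _
  · exact le_of_lt (m.xe_strictMonoOn i j h hj)

lemma xe_nonneg {i : ℕ} (hi : i ≤ m.I) : 0 ≤ m.xe i := by
  have := m.xe_monoOn (Nat.zero_le i) hi; rwa [m.xe0] at this

lemma xe_le_one {i : ℕ} (hi : i ≤ m.I) : m.xe i ≤ 1 := by
  have := m.xe_monoOn hi (le_refl m.I); rwa [m.xeI] at this

lemma xc_zero : m.xc 0 = 0 := by simp [Mesh.xc]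

lemma xc_top : m.xc (m.I + 1) = 1 := by
  have : m.I + 1 ≠ 0 := by omega
  simp [Mesh.xc, this]

lemma xc_eq {i : ℕ} (h1 : 1 ≤ i) (h2 : i ≤ m.I) :
    m.xc i = (m.xe (i - 1) + m.xe i) / 2 := by
  have hi0 : i ≠ 0 := by omega
  have hi1 : i ≠ m.I + 1 := by omega
  simp [Mesh.xc, hi0, hi1]

lemma xc_lt_succ {i : ℕ} (hi : i ≤ m.I) : m.xc i < m.xc (i + 1) := by
  have hI := m.hI
  rcases Nat.eq_zero_or_pos i with h0 | h1
  · subst h0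
    rw [m.xc_zero, m.xc_eq (le_refl 1) hI]
    have h0 : m.xe 0 = 0 := m.xe0
    have h2 : m.xe 0 < m.xe 1 := m.mono 0 (by omega)
    norm_num [h0] at h2 ⊢
    linarith
  · rcases eq_or_lt_of_le hi with hiI | hiI
    · subst hiI
      rw [m.xc_top, m.xc_eq h1 (le_refl _)]
      have h2 : m.xe (m.I - 1) < m.xe m.I := m.xe_strictMonoOn _ _ (by omega) (le_refl _)
      rw [m.xeI] at h2 ⊢; linarith
    · have hi1 : i + 1 ≤ m.I := hiI
      rw [m.xc_eq h1 (by omega), m.xc_eq (by omega) hi1]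
      have h2 : m.xe (i - 1) < m.xe (i + 1) := m.xe_strictMonoOn _ _ (by omega) hi1
      have h3 : (i + 1 : ℕ) - 1 = i := by omega
      rw [h3]; linarith

lemma hp_pos {i : ℕ} (hi : i ≤ m.I) : 0 < m.hp i := by
  have := m.xc_lt_succ hi; simp [Mesh.hp]; linarith

lemma sum_hp : ∑ i ∈ Finset.range (m.I + 1), m.hp i = 1 := by
  have := Finset.sum_range_sub (f := m.xc) (n := m.I + 1)
  simp only [Mesh.hp]
  rw [this, m.xc_top, m.xc_zero]; ring

lemma norm1sq_nonneg (w : ℕ → ℝ) : 0 ≤ m.norm1sq w := by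
  have h1 : 0 ≤ ∑ i ∈ Finset.range (m.I + 1), (w (i + 1) - w i) ^ 2 / m.hp i := by
    apply Finset.sum_nonneg
    intro i hi
    exact div_nonneg (sq_nonneg _) (le_of_lt (m.hp_pos (by simpa using Nat.lt_succ_iff.mp (Finset.mem_range.mp hi))))
  simp only [Mesh.norm1sq]
  positivity

end Mesh
end Corrosion
namespace Corrosion
namespace Mesh
variable (m : Mesh)

lemma sInf_cell {x : ℝ} {j : ℕ} (h1 : 1 ≤ j) (h2 : j ≤ m.I)
    (h3 : m.xe (j - 1) ≤ x) (h4 : x < m.xe j) :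
    sInf {i : ℕ | x < m.xe i} = j := by
  have hne : j ∈ {i : ℕ | x < m.xe i} := h4
  have hle : sInf {i : ℕ | x < m.xe i} ≤ j := Nat.sInf_le hne
  have hmem : x < m.xe (sInf {i : ℕ | x < m.xe i}) :=
    Nat.sInf_mem (⟨j, hne⟩ : Set.Nonempty {i : ℕ | x < m.xe i})
  by_contra hne2
  have hlt : sInf {i : ℕ | x < m.xe i} < j := lt_of_le_of_ne hle hne2
  have hmono : m.xe (sInf {i : ℕ | x < m.xe i}) ≤ m.xe (j - 1) :=
    m.xe_monoOn (by omega) (by omega)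
  linarith

lemma pw_eq (w : ℕ → ℝ) {x : ℝ} (hx : x ∈ Set.Ioo (0:ℝ) 1) {j : ℕ} (h1 : 1 ≤ j)
    (h2 : j ≤ m.I) (h3 : m.xe (j - 1) ≤ x) (h4 : x < m.xe j) : m.pw w x = w j := by
  have h0 : x ≠ 0 := ne_of_gt hx.1
  have hone : x ≠ 1 := ne_of_lt hx.2
  simp only [Mesh.pw, h0, hone, if_false, m.sInf_cell h1 h2 h3 h4]

lemma exists_cell {x : ℝ} (hx : x ∈ Set.Ioo (0:ℝ) 1) :
    ∃ j, 1 ≤ j ∧ j ≤ m.I ∧ m.xe (j - 1) ≤ x ∧ x < m.xe j := by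
  have hIS : m.I ∈ {i : ℕ | x < m.xe i} := by
    show x < m.xe m.I; rw [m.xeI]; exact hx.2
  refine ⟨sInf {i : ℕ | x < m.xe i}, ?_, Nat.sInf_le hIS, ?_, ?_⟩
  · rcases Nat.eq_zero_or_pos (sInf {i : ℕ | x < m.xe i}) with h | h
    · exfalso
      have hmem : x < m.xe (sInf {i : ℕ | x < m.xe i}) :=
        Nat.sInf_mem (⟨m.I, hIS⟩ : Set.Nonempty {i : ℕ | x < m.xe i})
      rw [h, m.xe0] at hmem
      linarith [hx.1]
    · exact h
  · have hnot : sInf {i : ℕ | x < m.xe i} - 1 ∉ {i : ℕ | x < m.xe i} := by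
      apply Nat.notMem_of_lt_sInf
      have : sInf {i : ℕ | x < m.xe i} ≠ 0 := by
        intro h
        have hmem : x < m.xe (sInf {i : ℕ | x < m.xe i}) :=
          Nat.sInf_mem (⟨m.I, hIS⟩ : Set.Nonempty {i : ℕ | x < m.xe i})
        rw [h, m.xe0] at hmem
        linarith [hx.1]
      omega
    exact not_lt.mp hnot
  · exact Nat.sInf_mem (⟨m.I, hIS⟩ : Set.Nonempty {i : ℕ | x < m.xe i})

lemma pw_rep (w : ℕ → ℝ) {x : ℝ} (hx : x ∈ Set.Ioo (0:ℝ) 1) :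
    m.pw w x = w 1 + ∑ j ∈ Finset.Ico 1 m.I,
      (w (j + 1) - w j) * (if m.xe j ≤ x then (1:ℝ) else 0) := by
  obtain ⟨j0, h1, h2, h3, h4⟩ := m.exists_cell hx
  rw [m.pw_eq w hx h1 h2 h3 h4, ← Finset.sum_Ico_consecutive _ h1 h2]
  have hA : ∀ j ∈ Finset.Ico 1 j0,
      (w (j + 1) - w j) * (if m.xe j ≤ x then (1:ℝ) else 0) = w (j + 1) - w j := by
    intro j hj
    rw [Finset.mem_Ico] at hj
    have hmono : m.xe j ≤ m.xe (j0 - 1) := m.xe_monoOn (by omega) (by omega)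
    rw [if_pos (le_trans hmono h3)]; ring
  have hB : ∀ j ∈ Finset.Ico j0 m.I,
      (w (j + 1) - w j) * (if m.xe j ≤ x then (1:ℝ) else 0) = 0 := by
    intro j hj
    rw [Finset.mem_Ico] at hj
    have hmono : m.xe j0 ≤ m.xe j := m.xe_monoOn hj.1 (by omega)
    rw [if_neg (by linarith)]; ring
  rw [Finset.sum_congr rfl hA, Finset.sum_congr rfl hB, Finset.sum_const_zero, add_zero]
  have htel : ∑ j ∈ Finset.Ico 1 j0, (w (j + 1) - w j) = w j0 - w 1 := by
    rw [Finset.sum_Ico_eq_sub _ h1, Finset.sum_range_sub (fun i => w i),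
      Finset.sum_range_sub (fun i => w i)]
    simp
  rw [htel]; ring

end Mesh

lemma abel_sum (a w : ℕ → ℝ) (n : ℕ) :
    ∑ j ∈ Finset.range n, (a j - a (j + 1)) * w (j + 1) =
      (∑ j ∈ Finset.range n, a j * (w (j + 1) - w j)) + a 0 * w 0 - a n * w n := by
  induction n with
  | zero => simp
  | succ n ih => rw [Finset.sum_range_succ, Finset.sum_range_succ, ih]; ring

example (s : Finset ℕ) (f g : ℕ → ℝ) :
    (∑ i ∈ s, f i * g i) ^ 2 ≤ (∑ i ∈ s, f i ^ 2) * (∑ i ∈ s, g i ^ 2) :=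
  Finset.sum_mul_sq_le_sq_mul_sq s f g

end Corrosion
namespace Corrosion

lemma elliptic_identity (n : ℕ) (lam : ℝ) (a w hh r : ℕ → ℝ)
    (heq : ∀ j ∈ Finset.range n, lam * (a j - a (j + 1)) = hh j * r j) :
    lam * ((∑ j ∈ Finset.range n, a j * (w (j + 1) - w j)) + a 0 * w 0 - a n * w n)
      = ∑ j ∈ Finset.range n, hh j * r j * w (j + 1) := by
  rw [← abel_sum, Finset.mul_sum]
  exact Finset.sum_congr rfl (fun j hj => by rw [← mul_assoc, heq j hj])

namespace Mesh
variable (m : Mesh)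

lemma sum_h : ∑ j ∈ Finset.range m.I, m.h (j + 1) = 1 := by
  have hrw : ∀ j, m.h (j + 1) = m.xe (j + 1) - m.xe j := by
    intro j; simp [Mesh.h]
  simp only [hrw]
  rw [Finset.sum_range_sub (fun i => m.xe i), m.xe0, m.xeI]; ring

lemma h_nonneg {j : ℕ} (h1 : 1 ≤ j) (h2 : j ≤ m.I) : 0 ≤ m.h j := by
  have := m.xe_monoOn (show j - 1 ≤ j by omega) h2
  simp [Mesh.h]; linarith

lemma sum_abs_le_sqrt (w : ℕ → ℝ) :
    ∑ j ∈ Finset.range (m.I + 1), |w (j + 1) - w j| ≤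
      Real.sqrt (∑ j ∈ Finset.range (m.I + 1), (w (j + 1) - w j) ^ 2 / m.hp j) := by
  have hhp : ∀ j ∈ Finset.range (m.I + 1), 0 < m.hp j := fun j hj =>
    m.hp_pos (Nat.lt_succ_iff.mp (Finset.mem_range.mp hj))
  have hcs := Finset.sum_mul_sq_le_sq_mul_sq (Finset.range (m.I + 1))
    (fun j => Real.sqrt (m.hp j)) (fun j => |w (j + 1) - w j| / Real.sqrt (m.hp j))
  have h1 : ∑ j ∈ Finset.range (m.I + 1),
      Real.sqrt (m.hp j) * (|w (j + 1) - w j| / Real.sqrt (m.hp j)) =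
      ∑ j ∈ Finset.range (m.I + 1), |w (j + 1) - w j| := by
    apply Finset.sum_congr rfl
    intro j hj
    have := hhp j hj
    field_simp
  have h2 : ∑ j ∈ Finset.range (m.I + 1), Real.sqrt (m.hp j) ^ 2 = 1 := by
    rw [← m.sum_hp]
    exact Finset.sum_congr rfl (fun j hj => Real.sq_sqrt (le_of_lt (hhp j hj)))
  have h3 : ∑ j ∈ Finset.range (m.I + 1), (|w (j + 1) - w j| / Real.sqrt (m.hp j)) ^ 2 =
      ∑ j ∈ Finset.range (m.I + 1), (w (j + 1) - w j) ^ 2 / m.hp j := by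
    apply Finset.sum_congr rfl
    intro j hj
    rw [div_pow, sq_abs, Real.sq_sqrt (le_of_lt (hhp j hj))]
  rw [h1, h2, h3, one_mul] at hcs
  have hnn : 0 ≤ ∑ j ∈ Finset.range (m.I + 1), |w (j + 1) - w j| :=
    Finset.sum_nonneg (fun j _ => abs_nonneg _)
  have := Real.sqrt_le_sqrt hcs
  rwa [Real.sqrt_sq hnn] at this

set_option maxHeartbeats 1000000 in
lemma elliptic_bound (lam al0 al1 D0 D1 R : ℝ)
    (hlam : 0 < lam) (hal0 : 0 < al0) (hal1 : 0 < al1) (hR : 0 ≤ R)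
    (w r : ℕ → ℝ)
    (hr : ∀ j ∈ Finset.range m.I, |r j| ≤ R)
    (heq : ∀ j ∈ Finset.range m.I,
      lam * ((w (j + 1) - w j) / m.hp j - (w (j + 1 + 1) - w (j + 1)) / m.hp (j + 1)) =
        m.h (j + 1) * r j)
    (hb0 : w 0 - al0 * ((w (0 + 1) - w 0) / m.hp 0) = D0)
    (hb1 : w (m.I + 1) + al1 * ((w (m.I + 1) - w m.I) / m.hp m.I) = D1) :
    m.norm1sq w ≤ 9 * (R + lam / al0 * |D0| + lam / al1 * |D1| + 1) ^ 2 /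
      (min lam (min (lam / al0) (lam / al1))) ^ 2 := by
  have key := elliptic_identity m.I lam (fun j => (w (j + 1) - w j) / m.hp j) w
    (fun j => m.h (j + 1)) r heq
  -- rewrite summand as squares
  have hterm : ∀ j ∈ Finset.range m.I,
      (w (j + 1) - w j) / m.hp j * (w (j + 1) - w j) = (w (j + 1) - w j) ^ 2 / m.hp j := by
    intro j _; ring
  rw [Finset.sum_congr rfl hterm] at key
  set S := ∑ j ∈ Finset.range (m.I + 1), (w (j + 1) - w j) ^ 2 / m.hp j with hSdef
  have hhp : ∀ j, j ≤ m.I → 0 < m.hp j := fun j hj => m.hp_pos hj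
  have hSnn : 0 ≤ S := Finset.sum_nonneg (fun j hj =>
    div_nonneg (sq_nonneg _) (le_of_lt (hhp j (Nat.lt_succ_iff.mp (Finset.mem_range.mp hj)))))
  have hsplit : ∑ j ∈ Finset.range m.I, (w (j + 1) - w j) ^ 2 / m.hp j =
      S - (w (m.I + 1) - w m.I) ^ 2 / m.hp m.I := by
    rw [hSdef, Finset.sum_range_succ]; ring
  rw [hsplit] at key
  -- boundary terms
  have hpI : 0 < m.hp m.I := hhp m.I (le_refl _)
  have hp0 : 0 < m.hp 0 := hhp 0 (Nat.zero_le _)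
  have ha0 : (w (0 + 1) - w 0) / m.hp 0 = (w 0 - D0) / al0 := by
    field_simp at hb0 ⊢
    linarith
  have haI : (w (m.I + 1) - w m.I) / m.hp m.I = (D1 - w (m.I + 1)) / al1 := by
    field_simp at hb1 ⊢
    linarith
  -- a_I * w_I = a_I * w_{I+1} - Δ_I²/hp_I
  have hIm : (w (m.I + 1) - w m.I) / m.hp m.I * w m.I =
      (w (m.I + 1) - w m.I) / m.hp m.I * w (m.I + 1) - (w (m.I + 1) - w m.I) ^ 2 / m.hp m.I := by
    field_simp; ring
  rw [hIm, ha0, haI] at key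
  -- key : lam * (S - ΔI²/hpI + (w0-D0)/al0 * w0 - ((D1-w_{I+1})/al1 * w_{I+1} - ΔI²/hpI)) = RHS0
  have KI : lam * S + lam / al0 * (w 0 ^ 2 - D0 * w 0) +
      lam / al1 * (w (m.I + 1) ^ 2 - D1 * w (m.I + 1)) =
      ∑ j ∈ Finset.range m.I, m.h (j + 1) * r j * w (j + 1) := by
    rw [← key]; field_simp; ring
  -- bound on interior values
  have hMB : ∀ j ∈ Finset.range m.I, |w (j + 1)| ≤ |w 0| + Real.sqrt S := by
    intro j hj
    have htel : w (j + 1) - w 0 = ∑ i ∈ Finset.range (j + 1), (w (i + 1) - w i) :=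
      (Finset.sum_range_sub (fun i => w i) (j + 1)).symm
    have h1 : |w (j + 1) - w 0| ≤ ∑ i ∈ Finset.range (j + 1), |w (i + 1) - w i| := by
      rw [htel]; exact Finset.abs_sum_le_sum_abs _ _
    have h2 : ∑ i ∈ Finset.range (j + 1), |w (i + 1) - w i| ≤
        ∑ i ∈ Finset.range (m.I + 1), |w (i + 1) - w i| := by
      apply Finset.sum_le_sum_of_subset_of_nonneg
      · exact Finset.range_subset_range.mpr (by have := Finset.mem_range.mp hj; omega)
      · intro i _ _; exact abs_nonneg _
    have h3 := m.sum_abs_le_sqrt w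
    rw [← hSdef] at h3
    have h4 : |w (j + 1)| ≤ |w 0| + |w (j + 1) - w 0| := by
      simpa using abs_add_le (w 0) (w (j + 1) - w 0)
    linarith
  -- bound RHS0
  have hRHS : ∑ j ∈ Finset.range m.I, m.h (j + 1) * r j * w (j + 1) ≤
      R * (|w 0| + Real.sqrt S) := by
    have hb : ∀ j ∈ Finset.range m.I, m.h (j + 1) * r j * w (j + 1) ≤
        m.h (j + 1) * (R * (|w 0| + Real.sqrt S)) := by
      intro j hj
      have hh := m.h_nonneg (show 1 ≤ j + 1 by omega)
        (show j + 1 ≤ m.I by have := Finset.mem_range.mp hj; omega)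
      have hrw : r j * w (j + 1) ≤ R * (|w 0| + Real.sqrt S) := by
        calc r j * w (j + 1) ≤ |r j * w (j + 1)| := le_abs_self _
        _ = |r j| * |w (j + 1)| := abs_mul _ _
        _ ≤ R * (|w 0| + Real.sqrt S) :=
            mul_le_mul (hr j hj) (hMB j hj) (abs_nonneg _) hR
      calc m.h (j + 1) * r j * w (j + 1) = m.h (j + 1) * (r j * w (j + 1)) := by ring
      _ ≤ m.h (j + 1) * (R * (|w 0| + Real.sqrt S)) := by
          exact mul_le_mul_of_nonneg_left hrw hh
    calc ∑ j ∈ Finset.range m.I, m.h (j + 1) * r j * w (j + 1)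
        ≤ ∑ j ∈ Finset.range m.I, m.h (j + 1) * (R * (|w 0| + Real.sqrt S)) :=
          Finset.sum_le_sum hb
      _ = (∑ j ∈ Finset.range m.I, m.h (j + 1)) * (R * (|w 0| + Real.sqrt S)) := by
          rw [← Finset.sum_mul]
      _ = R * (|w 0| + Real.sqrt S) := by rw [m.sum_h]; ring
  -- assemble
  set Q := m.norm1sq w with hQdef
  have hQeq : Q = S + w 0 ^ 2 + w (m.I + 1) ^ 2 := by rw [hQdef, hSdef]; rfl
  have hQnn : 0 ≤ Q := by rw [hQeq]; positivity
  set N := Real.sqrt Q with hNdef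
  have hN2 : N ^ 2 = Q := Real.sq_sqrt hQnn
  have hNnn : 0 ≤ N := Real.sqrt_nonneg _
  have hsS : Real.sqrt S ≤ N := by
    apply Real.sqrt_le_sqrt; rw [hQeq]; linarith [sq_nonneg (w 0), sq_nonneg (w (m.I + 1))]
  have hw0 : |w 0| ≤ N := by
    rw [hNdef, ← Real.sqrt_sq_eq_abs]
    apply Real.sqrt_le_sqrt; rw [hQeq]; linarith [sq_nonneg (w (m.I + 1)), hSnn]
  have hwI : |w (m.I + 1)| ≤ N := by
    rw [hNdef, ← Real.sqrt_sq_eq_abs]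
    apply Real.sqrt_le_sqrt; rw [hQeq]; linarith [sq_nonneg (w 0), hSnn]
  set c := min lam (min (lam / al0) (lam / al1)) with hcdef
  have hc : 0 < c := by
    apply lt_min hlam
    exact lt_min (div_pos hlam hal0) (div_pos hlam hal1)
  set A := R + lam / al0 * |D0| + lam / al1 * |D1| + 1 with hAdef
  have hA : 0 < A := by
    have : 0 ≤ lam / al0 * |D0| := by positivity
    have : 0 ≤ lam / al1 * |D1| := by positivity
    rw [hAdef]; positivity
  have hcle1 : c ≤ lam := min_le_left _ _
  have hcle2 : c ≤ lam / al0 := le_trans (min_le_right _ _) (min_le_left _ _)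
  have hcle3 : c ≤ lam / al1 := le_trans (min_le_right _ _) (min_le_right _ _)
  -- c * Q ≤ 3 A N
  have hmain : c * Q ≤ 3 * A * N := by
    have e1 : c * Q ≤ lam * S + lam / al0 * w 0 ^ 2 + lam / al1 * w (m.I + 1) ^ 2 := by
      rw [hQeq]
      have q1 := mul_le_mul_of_nonneg_right hcle1 hSnn
      have q2 := mul_le_mul_of_nonneg_right hcle2 (sq_nonneg (w 0))
      have q3 := mul_le_mul_of_nonneg_right hcle3 (sq_nonneg (w (m.I + 1)))
      linarith [q1, q2, q3]
    have e2 : lam * S + lam / al0 * w 0 ^ 2 + lam / al1 * w (m.I + 1) ^ 2 =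
        (∑ j ∈ Finset.range m.I, m.h (j + 1) * r j * w (j + 1)) +
        lam / al0 * (D0 * w 0) + lam / al1 * (D1 * w (m.I + 1)) := by
      rw [← KI]; ring
    have e3 : lam / al0 * (D0 * w 0) ≤ lam / al0 * (|D0| * |w 0|) := by
      apply mul_le_mul_of_nonneg_left _ (le_of_lt (div_pos hlam hal0))
      calc D0 * w 0 ≤ |D0 * w 0| := le_abs_self _
      _ = |D0| * |w 0| := abs_mul _ _
    have e4 : lam / al1 * (D1 * w (m.I + 1)) ≤ lam / al1 * (|D1| * |w (m.I + 1)|) := by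
      apply mul_le_mul_of_nonneg_left _ (le_of_lt (div_pos hlam hal1))
      calc D1 * w (m.I + 1) ≤ |D1 * w (m.I + 1)| := le_abs_self _
      _ = |D1| * |w (m.I + 1)| := abs_mul _ _
    have hsSnn : 0 ≤ Real.sqrt S := Real.sqrt_nonneg _
    have e5 : R * (|w 0| + Real.sqrt S) + lam / al0 * (|D0| * |w 0|) +
        lam / al1 * (|D1| * |w (m.I + 1)|) ≤ 3 * A * N := by
      have p1 : (0:ℝ) ≤ lam / al0 * |D0| := by positivity
      have p2 : (0:ℝ) ≤ lam / al1 * |D1| := by positivity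
      have f1 := mul_le_mul_of_nonneg_left hw0 hR
      have f2 := mul_le_mul_of_nonneg_left hsS hR
      have f3 := mul_le_mul_of_nonneg_left hw0 p1
      have f4 := mul_le_mul_of_nonneg_left hwI p2
      have h3A : 3 * A * N = 3 * (R * N) + 3 * (lam / al0 * |D0| * N) +
          3 * (lam / al1 * |D1| * N) + 3 * N := by rw [hAdef]; ring
      have g1 : (0:ℝ) ≤ R * N := mul_nonneg hR hNnn
      have g2 : (0:ℝ) ≤ lam / al0 * |D0| * N := mul_nonneg p1 hNnn
      have g3 : (0:ℝ) ≤ lam / al1 * |D1| * N := mul_nonneg p2 hNnn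
      rw [h3A]
      linarith [f1, f2, f3, f4, g1, g2, g3, hNnn]
    calc c * Q ≤ lam * S + lam / al0 * w 0 ^ 2 + lam / al1 * w (m.I + 1) ^ 2 := e1
    _ = ∑ j ∈ Finset.range m.I, m.h (j + 1) * r j * w (j + 1) +
        lam / al0 * (D0 * w 0) + lam / al1 * (D1 * w (m.I + 1)) := e2
    _ ≤ R * (|w 0| + Real.sqrt S) + lam / al0 * (|D0| * |w 0|) +
        lam / al1 * (|D1| * |w (m.I + 1)|) := by linarith [hRHS, e3, e4]
    _ ≤ 3 * A * N := e5
  -- conclude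
  rw [le_div_iff₀ (by positivity : (0:ℝ) < c ^ 2)]
  have hcQ2 := mul_le_mul_of_nonneg_left hmain (le_of_lt hc)
  have hcN2 : c ^ 2 * N ^ 2 = c ^ 2 * Q := by rw [hN2]
  nlinarith [sq_nonneg (c * N - 3 * A), hcQ2, hcN2]

end Mesh
end Corrosion
namespace Corrosion
namespace Mesh
variable (m : Mesh)

set_option maxHeartbeats 1000000 in
lemma translate_bound (w : ℕ → ℝ) {η : ℝ} (hη : 0 < η) :
    ∫ x in Set.Ioo (0:ℝ) (1 - η), (m.pw w (x + η) - m.pw w x) ^ 2 ≤ η * m.norm1sq w := by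
  have hQnn : 0 ≤ m.norm1sq w := m.norm1sq_nonneg w
  by_cases hint : MeasureTheory.IntegrableOn
      (fun x => (m.pw w (x + η) - m.pw w x) ^ 2) (Set.Ioo (0:ℝ) (1 - η)) volume
  swap
  · rw [MeasureTheory.integral_undef hint]
    positivity
  set G : ℝ → ℝ := fun x => ∑ j ∈ Finset.Ico 1 m.I,
    ((w (j + 1) - w j) ^ 2 / m.hp j) *
      Set.indicator (Set.Ico (m.xe j - η) (m.xe j)) (fun _ => (1:ℝ)) x with hGdef
  have hjle : ∀ j ∈ Finset.Ico 1 m.I, j ≤ m.I := fun j hj => by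
    have := Finset.mem_Ico.mp hj; omega
  have hintj : ∀ j ∈ Finset.Ico 1 m.I, MeasureTheory.IntegrableOn
      (fun x => ((w (j + 1) - w j) ^ 2 / m.hp j) *
        Set.indicator (Set.Ico (m.xe j - η) (m.xe j)) (fun _ => (1:ℝ)) x)
      (Set.Ioo (0:ℝ) (1 - η)) volume := by
    intro j hj
    apply MeasureTheory.Integrable.const_mul
    refine (MeasureTheory.integrable_indicator_iff measurableSet_Ico).2 ?_
    refine MeasureTheory.integrableOn_const (ne_of_lt ?_)
    exact lt_of_le_of_lt (MeasureTheory.Measure.restrict_apply_le _ _) measure_Ico_lt_top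
  have hGint : MeasureTheory.IntegrableOn G (Set.Ioo (0:ℝ) (1 - η)) volume := by
    rw [hGdef]
    exact MeasureTheory.integrable_finset_sum _ hintj
  have hpoint : ∀ x ∈ Set.Ioo (0:ℝ) (1 - η), (m.pw w (x + η) - m.pw w x) ^ 2 ≤ G x := by
    intro x hx
    have hx1 : x ∈ Set.Ioo (0:ℝ) 1 := ⟨hx.1, by linarith [hx.2]⟩
    have hx2 : x + η ∈ Set.Ioo (0:ℝ) 1 := ⟨by linarith [hx.1], by linarith [hx.2]⟩
    set X : ℕ → ℝ := fun j =>
      Set.indicator (Set.Ico (m.xe j - η) (m.xe j)) (fun _ => (1:ℝ)) x with hXdef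
    have hX01 : ∀ j, X j = 0 ∨ X j = 1 := by
      intro j
      simp only [hXdef]
      by_cases hmem : x ∈ Set.Ico (m.xe j - η) (m.xe j)
      · right; simp [Set.indicator_of_mem hmem]
      · left; simp [Set.indicator_of_notMem hmem]
    have hXnn : ∀ j, 0 ≤ X j := by
      intro j; rcases hX01 j with h | h <;> rw [h] <;> norm_num
    have hXle1 : ∀ j, X j ≤ 1 := by
      intro j; rcases hX01 j with h | h <;> rw [h] <;> norm_num
    have hXsq : ∀ j, X j ^ 2 = X j := by
      intro j; rcases hX01 j with h | h <;> rw [h] <;> norm_num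
    have hdiff : m.pw w (x + η) - m.pw w x =
        ∑ j ∈ Finset.Ico 1 m.I, (w (j + 1) - w j) * X j := by
      rw [m.pw_rep w hx2, m.pw_rep w hx1, add_sub_add_left_eq_sub, ← Finset.sum_sub_distrib]
      apply Finset.sum_congr rfl
      intro j hj
      rw [← mul_sub]
      congr 1
      simp only [hXdef]
      by_cases hA : m.xe j ≤ x
      · rw [if_pos hA, if_pos (by linarith), Set.indicator_of_notMem
          (fun hmem => absurd hmem.2 (not_lt.mpr hA))]
        norm_num
      · by_cases hB : m.xe j ≤ x + η
        · rw [if_pos hB, if_neg hA, Set.indicator_of_mem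
            (show x ∈ Set.Ico (m.xe j - η) (m.xe j) from ⟨by linarith, lt_of_not_ge hA⟩)]
          norm_num
        · rw [if_neg hB, if_neg hA, Set.indicator_of_notMem
            (fun hmem => absurd hmem.1 (by push_neg at hB ⊢; linarith))]
          norm_num
    rw [hdiff]
    have hGnn : 0 ≤ G x := by
      rw [hGdef]
      apply Finset.sum_nonneg
      intro j hj
      exact mul_nonneg (div_nonneg (sq_nonneg _) (le_of_lt (m.hp_pos (hjle j hj)))) (hXnn j)
    have hcs := Finset.sum_mul_sq_le_sq_mul_sq (Finset.Ico 1 m.I)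
      (fun j => Real.sqrt (m.hp j) * X j)
      (fun j => (w (j + 1) - w j) / Real.sqrt (m.hp j) * X j)
    have e1 : ∑ j ∈ Finset.Ico 1 m.I,
        (Real.sqrt (m.hp j) * X j) * ((w (j + 1) - w j) / Real.sqrt (m.hp j) * X j) =
        ∑ j ∈ Finset.Ico 1 m.I, (w (j + 1) - w j) * X j := by
      apply Finset.sum_congr rfl
      intro j hj
      have hhp := m.hp_pos (hjle j hj)
      have hs : Real.sqrt (m.hp j) ≠ 0 := ne_of_gt (Real.sqrt_pos.mpr hhp)
      have : Real.sqrt (m.hp j) * X j * ((w (j + 1) - w j) / Real.sqrt (m.hp j) * X j) =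
          (w (j + 1) - w j) * X j ^ 2 := by
        field_simp
      rw [this, hXsq]
    have e2 : ∑ j ∈ Finset.Ico 1 m.I, (Real.sqrt (m.hp j) * X j) ^ 2 =
        ∑ j ∈ Finset.Ico 1 m.I, m.hp j * X j := by
      apply Finset.sum_congr rfl
      intro j hj
      rw [mul_pow, Real.sq_sqrt (le_of_lt (m.hp_pos (hjle j hj))), hXsq]
    have e3 : ∑ j ∈ Finset.Ico 1 m.I,
        ((w (j + 1) - w j) / Real.sqrt (m.hp j) * X j) ^ 2 = G x := by
      rw [hGdef]
      apply Finset.sum_congr rfl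
      intro j hj
      rw [mul_pow, div_pow, Real.sq_sqrt (le_of_lt (m.hp_pos (hjle j hj))), hXsq]
    rw [e1, e2, e3] at hcs
    have hle1 : ∑ j ∈ Finset.Ico 1 m.I, m.hp j * X j ≤ 1 := by
      have s1 : ∑ j ∈ Finset.Ico 1 m.I, m.hp j * X j ≤ ∑ j ∈ Finset.Ico 1 m.I, m.hp j := by
        apply Finset.sum_le_sum
        intro j hj
        have hhp := le_of_lt (m.hp_pos (hjle j hj))
        nlinarith [hXle1 j, hXnn j]
      have s2 : ∑ j ∈ Finset.Ico 1 m.I, m.hp j ≤ ∑ j ∈ Finset.range (m.I + 1), m.hp j := by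
        apply Finset.sum_le_sum_of_subset_of_nonneg
        · intro j hj
          rw [Finset.mem_range]
          have := Finset.mem_Ico.mp hj; omega
        · intro j hj _
          exact le_of_lt (m.hp_pos (by simpa using Nat.lt_succ_iff.mp (Finset.mem_range.mp hj)))
      rw [m.sum_hp] at s2
      linarith
    calc (∑ j ∈ Finset.Ico 1 m.I, (w (j + 1) - w j) * X j) ^ 2
        ≤ (∑ j ∈ Finset.Ico 1 m.I, m.hp j * X j) * G x := hcs
      _ ≤ 1 * G x := mul_le_mul_of_nonneg_right hle1 hGnn
      _ = G x := one_mul _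
  have step1 : ∫ x in Set.Ioo (0:ℝ) (1 - η), (m.pw w (x + η) - m.pw w x) ^ 2 ≤
      ∫ x in Set.Ioo (0:ℝ) (1 - η), G x :=
    MeasureTheory.setIntegral_mono_on hint hGint measurableSet_Ioo hpoint
  have step2 : ∫ x in Set.Ioo (0:ℝ) (1 - η), G x ≤ η * m.norm1sq w := by
    rw [hGdef, MeasureTheory.integral_finset_sum _ hintj]
    have hterm : ∀ j ∈ Finset.Ico 1 m.I,
        (∫ x in Set.Ioo (0:ℝ) (1 - η), ((w (j + 1) - w j) ^ 2 / m.hp j) *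
          Set.indicator (Set.Ico (m.xe j - η) (m.xe j)) (fun _ => (1:ℝ)) x) ≤
        ((w (j + 1) - w j) ^ 2 / m.hp j) * η := by
      intro j hj
      rw [MeasureTheory.integral_const_mul, MeasureTheory.integral_indicator_const _ measurableSet_Ico]
      have hcnn : 0 ≤ (w (j + 1) - w j) ^ 2 / m.hp j :=
        div_nonneg (sq_nonneg _) (le_of_lt (m.hp_pos (hjle j hj)))
      apply mul_le_mul_of_nonneg_left _ hcnn
      have h1 : (volume.restrict (Set.Ioo (0:ℝ) (1 - η)))
          (Set.Ico (m.xe j - η) (m.xe j)) ≤ ENNReal.ofReal η := by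
        refine le_trans (MeasureTheory.Measure.restrict_apply_le _ _) ?_
        rw [Real.volume_Ico]
        apply ENNReal.ofReal_le_ofReal
        linarith
      have h2 := ENNReal.toReal_mono ENNReal.ofReal_ne_top h1
      rw [ENNReal.toReal_ofReal (le_of_lt hη)] at h2
      rw [smul_eq_mul, mul_one]; exact h2
    calc ∑ j ∈ Finset.Ico 1 m.I, ∫ x in Set.Ioo (0:ℝ) (1 - η),
          ((w (j + 1) - w j) ^ 2 / m.hp j) *
          Set.indicator (Set.Ico (m.xe j - η) (m.xe j)) (fun _ => (1:ℝ)) x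
        ≤ ∑ j ∈ Finset.Ico 1 m.I, ((w (j + 1) - w j) ^ 2 / m.hp j) * η :=
          Finset.sum_le_sum hterm
      _ = η * ∑ j ∈ Finset.Ico 1 m.I, (w (j + 1) - w j) ^ 2 / m.hp j := by
          rw [← Finset.sum_mul, mul_comm]
      _ ≤ η * m.norm1sq w := by
          apply mul_le_mul_of_nonneg_left _ (le_of_lt hη)
          have s2 : ∑ j ∈ Finset.Ico 1 m.I, (w (j + 1) - w j) ^ 2 / m.hp j ≤
              ∑ j ∈ Finset.range (m.I + 1), (w (j + 1) - w j) ^ 2 / m.hp j := by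
            apply Finset.sum_le_sum_of_subset_of_nonneg
            · intro j hj; rw [Finset.mem_range]; have := Finset.mem_Ico.mp hj; omega
            · intro j hj _
              exact div_nonneg (sq_nonneg _)
                (le_of_lt (m.hp_pos (Nat.lt_succ_iff.mp (Finset.mem_range.mp hj))))
          have hnorm : m.norm1sq w = (∑ j ∈ Finset.range (m.I + 1),
              (w (j + 1) - w j) ^ 2 / m.hp j) + w 0 ^ 2 + w (m.I + 1) ^ 2 := rfl
          rw [hnorm]
          linarith [sq_nonneg (w 0), sq_nonneg (w (m.I + 1))]
  linarith

end Mesh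
end Corrosion
open Corrosion in
/-- space translate estimate for the approximate potential. -/
theorem space_translate_estimate_potential
    (d : Data) (heps : 0 < d.eps) (ha0 : 0 < d.alpha0) (ha1 : 0 < d.alpha1) (hH : d.HypH)
    (T : ℝ) (hT : 0 < T) :
    ∃ C : ℝ, 0 < C ∧ ∀ (K : ℕ), 1 ≤ K → ∀ (m : Mesh)
      (sol : Sp → ℕ → ℕ → ℝ) (Psi : ℕ → ℕ → ℝ),
      Scheme m d T K sol Psi → Stable m d K sol →
      ∀ η : ℝ, 0 < η → η < m.size →
        (∫ t in Set.Ioo (0:ℝ) T, ∫ x in Set.Ioo (0:ℝ) (1 - η),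
          (apx m T K Psi (x + η) t - apx m T K Psi x t) ^ 2) ≤ C * η := by
  set R := 3 * d.umax Sp.P + d.umax Sp.N + |d.rho| with hRdef
  have hR : 0 ≤ R := by
    have h1 := d.umax_pos Sp.P
    have h2 := d.umax_pos Sp.N
    have h3 := abs_nonneg d.rho
    rw [hRdef]; linarith
  set lam := d.lam ^ 2 with hlamdef
  have hlam : 0 < lam := by rw [hlamdef]; exact pow_pos d.lam_pos 2
  set C1 := 9 * (R + lam / d.alpha0 * |d.dPsi0| + lam / d.alpha1 * |d.V - d.dPsi1| + 1) ^ 2 /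
      (min lam (min (lam / d.alpha0) (lam / d.alpha1))) ^ 2 with hC1def
  have hC1 : 0 < C1 := by
    have p1 : (0:ℝ) ≤ lam / d.alpha0 * |d.dPsi0| := by positivity
    have p2 : (0:ℝ) ≤ lam / d.alpha1 * |d.V - d.dPsi1| := by positivity
    have hc : 0 < min lam (min (lam / d.alpha0) (lam / d.alpha1)) :=
      lt_min hlam (lt_min (div_pos hlam ha0) (div_pos hlam ha1))
    have hE : (0:ℝ) < R + lam / d.alpha0 * |d.dPsi0| + lam / d.alpha1 * |d.V - d.dPsi1| + 1 := by
      linarith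
    rw [hC1def]
    exact div_pos (by positivity) (pow_pos hc 2)
  refine ⟨C1 * T, mul_pos hC1 hT, ?_⟩
  intro K hK m sol Psi hscheme hstable η hη _
  have hstep : ∀ k, k < K → m.norm1sq (Psi (k + 1)) ≤ C1 := by
    intro k hk
    rw [hC1def]
    apply m.elliptic_bound lam d.alpha0 d.alpha1 d.dPsi0 (d.V - d.dPsi1) R hlam ha0 ha1 hR
      (Psi (k + 1)) (fun j => 3 * sol Sp.P (k + 1) (j + 1) - sol Sp.N (k + 1) (j + 1) + d.rho)
    · intro j hj
      have hjI : j + 1 ≤ m.I := by have := Finset.mem_range.mp hj; omega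
      have hP := hstable Sp.P (k + 1) (by omega) (j + 1) (by omega)
      have hN := hstable Sp.N (k + 1) (by omega) (j + 1) (by omega)
      have ha := le_abs_self d.rho
      have hb := neg_abs_le d.rho
      rw [hRdef, abs_le]
      constructor <;> [linarith [hP.1, hN.2]; linarith [hP.2, hN.1]]
    · intro j hj
      have hjI : j + 1 ≤ m.I := by have := Finset.mem_range.mp hj; omega
      have heq := hscheme.2.1 k hk (j + 1) (by omega) hjI
      simp only [dPsiF, Nat.add_sub_cancel] at heq
      rw [hlamdef]
      linear_combination heq
    · have hb0 := hscheme.2.2.2.1 k hk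
      simp only [dPsiF] at hb0
      exact hb0
    · have hb1 := hscheme.2.2.2.2.1 k hk
      simp only [dPsiF] at hb1
      exact hb1
  have houter : ∀ t ∈ Set.Ioo (0:ℝ) T,
      (∫ x in Set.Ioo (0:ℝ) (1 - η),
        (apx m T K Psi (x + η) t - apx m T K Psi x t) ^ 2) ≤ η * C1 := by
    intro t ht
    have hKpos : (0:ℝ) < (K:ℝ) := by exact_mod_cast Nat.lt_of_lt_of_le Nat.zero_lt_one hK
    have hTK : 0 < T / K := div_pos hT hKpos
    have hk : Nat.floor (t / (T / K)) < K := by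
      rw [Nat.floor_lt (le_of_lt (div_pos ht.1 hTK))]
      rw [div_lt_iff₀ hTK]
      have hTT : (K:ℝ) * (T / K) = T := by field_simp
      rw [hTT]; exact ht.2
    have happ : ∀ y, apx m T K Psi y t = m.pw (Psi (Nat.floor (t / (T / K)) + 1)) y :=
      fun y => rfl
    simp only [happ]
    calc ∫ x in Set.Ioo (0:ℝ) (1 - η),
          (m.pw (Psi (Nat.floor (t / (T / K)) + 1)) (x + η) -
            m.pw (Psi (Nat.floor (t / (T / K)) + 1)) x) ^ 2
        ≤ η * m.norm1sq (Psi (Nat.floor (t / (T / K)) + 1)) := m.translate_bound _ hη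
      _ ≤ η * C1 := mul_le_mul_of_nonneg_left (hstep _ hk) (le_of_lt hη)
  by_cases hfint : MeasureTheory.IntegrableOn
      (fun t => ∫ x in Set.Ioo (0:ℝ) (1 - η),
        (apx m T K Psi (x + η) t - apx m T K Psi x t) ^ 2)
      (Set.Ioo (0:ℝ) T) volume
  · have hconst : MeasureTheory.IntegrableOn (fun _ : ℝ => η * C1)
        (Set.Ioo (0:ℝ) T) volume :=
      MeasureTheory.integrableOn_const
        (ne_of_lt (by rw [Real.volume_Ioo]; exact ENNReal.ofReal_lt_top))
    calc (∫ t in Set.Ioo (0:ℝ) T, ∫ x in Set.Ioo (0:ℝ) (1 - η),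
          (apx m T K Psi (x + η) t - apx m T K Psi x t) ^ 2)
        ≤ ∫ _ in Set.Ioo (0:ℝ) T, η * C1 :=
          MeasureTheory.setIntegral_mono_on hfint hconst measurableSet_Ioo houter
      _ = (volume (Set.Ioo (0:ℝ) T)).toReal • (η * C1) := MeasureTheory.setIntegral_const _
      _ = T * (η * C1) := by
          rw [Real.volume_Ioo, ENNReal.toReal_ofReal (by linarith : (0:ℝ) ≤ T - 0)]
          simp [smul_eq_mul]
      _ = C1 * T * η := by ring
  · rw [MeasureTheory.integral_undef hfint]
    exact mul_nonneg (mul_nonneg (le_of_lt hC1) (le_of_lt hT)) (le_of_lt hη)
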